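/- arXiv:1004.2392 — 2 statements merged into one kernel-verified Lean document; each statement's English description precedes it below -/
import Mathlib

section
/- Let D be an n×N complex matrix and let D_{L1,L2} be the (nL1)×(NL2) block matrix formed by tiling L1×L2 copies of D. Then for every positive integer p, tr_norm(((1/(N L2)) D_{L1,L2} D_{L1,L2}^H)^p) = L1^{p-1} · tr_norm(((1/N) D D^H)^p), where tr_norm denotes the normalized trace (trace divided by matrix dimension). -/
open Matrix

/-- Tile a square matrix `X` into an `L × L` block matrix of copies. -/
def tileSq {n : ℕ} (L : ℕ) (X : Matrix (Fin n) (Fin n) ℂ) :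
    Matrix (Fin L × Fin n) (Fin L × Fin n) ℂ :=
  fun a b => X a.2 b.2

lemma tileSq_mul {n L : ℕ} (X Y : Matrix (Fin n) (Fin n) ℂ) :
    tileSq L X * tileSq L Y = (L : ℂ) • tileSq L (X * Y) := by
  ext a b
  simp [tileSq, Matrix.mul_apply, Fintype.sum_prod_type, Finset.mul_sum]

lemma tileSq_pow {n L : ℕ} (X : Matrix (Fin n) (Fin n) ℂ) (p : ℕ) (hp : 0 < p) :
    tileSq L X ^ p = (L : ℂ) ^ (p - 1) • tileSq L (X ^ p) := by
  induction p with
  | zero => exact absurd hp (lt_irrefl 0)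
  | succ q ih =>
    rcases Nat.eq_zero_or_pos q with h | h
    · subst h; simp
    · rw [pow_succ, ih h, Matrix.smul_mul, tileSq_mul, smul_smul, ← pow_succ,
        Nat.succ_sub_one, Nat.sub_add_cancel h, pow_succ]

lemma tileSq_trace {n L : ℕ} (X : Matrix (Fin n) (Fin n) ℂ) :
    Matrix.trace (tileSq L X) = (L : ℂ) * Matrix.trace X := by
  simp [tileSq, Matrix.trace, Matrix.diag, Fintype.sum_prod_type, Finset.mul_sum]

/-- Stacking moment identity: the normalized-trace moments of the compound
matrix `D_{L1,L2}` (the `L1 × L2` block tiling of `D`) are `L1^(p-1)` times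
those of `D`. -/
theorem stmt_0 (n N L1 L2 : ℕ) (hn : 0 < n) (hN : 0 < N) (hL1 : 0 < L1) (hL2 : 0 < L2)
    (D : Matrix (Fin n) (Fin N) ℂ) (p : ℕ) (hp : 0 < p)
    (Dt : Matrix (Fin L1 × Fin n) (Fin L2 × Fin N) ℂ)
    (hDt : ∀ a b, Dt a b = D a.2 b.2) :
    (1 / (n * L1 : ℂ)) * Matrix.trace ((((N * L2 : ℂ))⁻¹ • (Dt * Dt.conjTranspose)) ^ p)
      = (L1 : ℂ) ^ (p - 1) *
        ((1 / (n : ℂ)) * Matrix.trace ((((N : ℂ))⁻¹ • (D * D.conjTranspose)) ^ p)) := by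
  have hNc : (N : ℂ) ≠ 0 := Nat.cast_ne_zero.mpr hN.ne'
  have hL2c : (L2 : ℂ) ≠ 0 := Nat.cast_ne_zero.mpr hL2.ne'
  have hnc : (n : ℂ) ≠ 0 := Nat.cast_ne_zero.mpr hn.ne'
  have hL1c : (L1 : ℂ) ≠ 0 := Nat.cast_ne_zero.mpr hL1.ne'
  have key : ((N * L2 : ℂ))⁻¹ • (Dt * Dt.conjTranspose)
      = tileSq L1 (((N : ℂ))⁻¹ • (D * D.conjTranspose)) := by
    ext a b
    simp only [Matrix.smul_apply, Matrix.mul_apply, tileSq, Matrix.conjTranspose_apply,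
      Fintype.sum_prod_type, hDt, smul_eq_mul]
    rw [Finset.sum_const, mul_inv]
    field_simp
    simp
  rw [key, tileSq_pow _ p hp, Matrix.trace_smul, tileSq_trace, smul_eq_mul]
  field_simp
end

section
/- Let X be an n×N standard complex Gaussian matrix, D a fixed n×N matrix, Y = D + X, and define the estimator T = tr_norm((1/N) Y Y^H) − 1 of D_1 = tr_norm((1/N) D D^H). Then Var(T) = (2 D_1 + 1)/(nN). -/
open MeasureTheory ProbabilityTheory Matrix

/-- `Z` is a standard complex Gaussian random variable: its real and imaginary
parts are independent, each Gaussian with mean `0` and variance `1/2`. -/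
def IsStdComplexGaussianEntry {Ω : Type*} [MeasurableSpace Ω] (μ : Measure Ω)
    (Z : Ω → ℂ) : Prop :=
  IndepFun (fun ω => (Z ω).re) (fun ω => (Z ω).im) μ ∧
  μ.map (fun ω => (Z ω).re) = gaussianReal 0 (1 / 2) ∧
  μ.map (fun ω => (Z ω).im) = gaussianReal 0 (1 / 2)

/-- `X` is a standard complex Gaussian random matrix: its entries are jointly
independent standard complex Gaussian random variables (mean zero, unit
variance). -/
def IsStdComplexGaussian {Ω : Type*} [MeasurableSpace Ω] (μ : Measure Ω)
    {I J : Type*} [Fintype I] [Fintype J] (X : Ω → Matrix I J ℂ) : Prop :=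
  iIndepFun (fun (q : I × J) ω => X ω q.1 q.2) μ ∧
  ∀ i j, IsStdComplexGaussianEntry μ (fun ω => X ω i j)


open Filter Set
open scoped NNReal ENNReal

section Aux

lemma tendsto_pow_mul_exp_neg_sq (k : ℕ) :
    Tendsto (fun x : ℝ => x ^ k * Real.exp (-x ^ 2)) atTop (nhds 0) := by
  have h : Tendsto (fun x : ℝ => (x ^ 2) ^ k * Real.exp (-x ^ 2)) atTop (nhds 0) := by
    have := (Real.tendsto_pow_mul_exp_neg_atTop_nhds_zero k).comp
      (tendsto_pow_atTop (two_ne_zero))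
    simpa [Function.comp_def] using this
  refine squeeze_zero' ?_ ?_ h
  · filter_upwards [eventually_ge_atTop (0:ℝ)] with x hx
    positivity
  · filter_upwards [eventually_ge_atTop (1:ℝ)] with x hx
    have hxk : x ^ k ≤ (x ^ 2) ^ k := by
      apply pow_le_pow_left₀ (by linarith)
      nlinarith
    exact mul_le_mul_of_nonneg_right hxk (Real.exp_nonneg _)

lemma integrable_pow_mul_exp (k : ℕ) :
    Integrable (fun x : ℝ => x ^ k * Real.exp (-x ^ 2)) := by
  have hk : (-1 : ℝ) < k := by
    calc (-1:ℝ) < 0 := by norm_num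
    _ ≤ k := Nat.cast_nonneg k
  have := integrable_rpow_mul_exp_neg_mul_sq (b := 1) one_pos (s := k) hk
  simpa [Real.rpow_natCast, neg_one_mul] using this

lemma int_exp_sq : ∫ x : ℝ, Real.exp (-x ^ 2) = Real.sqrt Real.pi := by
  have := integral_gaussian 1
  simpa using this

lemma int_odd_pow (k : ℕ) (hk : Odd k) :
    ∫ x : ℝ, x ^ k * Real.exp (-x ^ 2) = 0 := by
  have h := integral_neg_eq_self (fun x : ℝ => x ^ k * Real.exp (-x ^ 2)) volume
  simp only [hk.neg_pow, neg_sq, neg_mul, integral_neg] at h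
  linarith

lemma int_parts (k : ℕ) :
    ∫ x in Ioi (0:ℝ), x ^ (k+2) * Real.exp (-x ^ 2)
      = ((k+1 : ℝ)/2) * ∫ x in Ioi (0:ℝ), x ^ k * Real.exp (-x ^ 2) := by
  set f : ℝ → ℝ := fun x => -(1/2) * (x ^ (k+1) * Real.exp (-x ^ 2)) with hf
  have hderiv : ∀ x ∈ Ioi (0:ℝ), HasDerivAt f
      (x ^ (k+2) * Real.exp (-x ^ 2) - ((k+1 : ℝ)/2) * (x ^ k * Real.exp (-x ^ 2))) x := by
    intro x _
    have h1 : HasDerivAt (fun x : ℝ => x ^ (k+1)) ((k+1 : ℝ) * x ^ k) x := by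
      simpa using hasDerivAt_pow (k+1) x
    have h2 : HasDerivAt (fun x : ℝ => Real.exp (-x ^ 2)) (Real.exp (-x ^ 2) * -(2*x)) x := by
      have := ((hasDerivAt_pow 2 x).neg).exp
      simpa using this
    have := ((h1.mul h2).const_mul (-(1/2 : ℝ)))
    exact this.congr_deriv (by ring)
  have hint : IntegrableOn (fun x : ℝ =>
      x ^ (k+2) * Real.exp (-x ^ 2) - ((k+1 : ℝ)/2) * (x ^ k * Real.exp (-x ^ 2))) (Ioi 0) :=
    ((integrable_pow_mul_exp (k+2)).sub ((integrable_pow_mul_exp k).const_mul _)).integrableOn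
  have hcont : ContinuousWithinAt f (Ici 0) 0 := by
    apply Continuous.continuousWithinAt
    continuity
  have htend : Tendsto f atTop (nhds 0) := by
    have h := (tendsto_pow_mul_exp_neg_sq (k+1)).const_mul (-(1/2 : ℝ))
    simpa only [mul_zero] using h
  have key := integral_Ioi_of_hasDerivAt_of_tendsto hcont hderiv hint htend
  have hf0 : f 0 = 0 := by simp [hf]
  rw [hf0, sub_zero] at key
  rw [integral_sub (integrable_pow_mul_exp (k+2)).integrableOn
    ((integrable_pow_mul_exp k).const_mul _).integrableOn, MeasureTheory.integral_const_mul] at key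
  linarith

lemma int_even_pow (k : ℕ) (hk : Even k) :
    ∫ x : ℝ, x ^ k * Real.exp (-x ^ 2)
      = 2 * ∫ x in Ioi (0:ℝ), x ^ k * Real.exp (-x ^ 2) := by
  have : ∫ x : ℝ, x ^ k * Real.exp (-x ^ 2)
      = ∫ x : ℝ, |x| ^ k * Real.exp (-|x| ^ 2) := by
    congr 1
    funext x
    rw [hk.pow_abs, sq_abs]
  rw [this]
  exact integral_comp_abs (f := fun x => x ^ k * Real.exp (-x ^ 2))

lemma int_sq_exp : ∫ x : ℝ, x ^ 2 * Real.exp (-x ^ 2) = Real.sqrt Real.pi / 2 := by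
  have h0 : ∫ x in Ioi (0:ℝ), x ^ 0 * Real.exp (-x ^ 2) = Real.sqrt Real.pi / 2 := by
    simp only [pow_zero, one_mul]
    have := integral_gaussian_Ioi 1
    simpa using this
  have h2 := int_parts 0
  rw [int_even_pow 2 (by decide)]
  rw [show (0:ℕ)+2 = 2 from rfl] at h2
  rw [h2, h0]
  push_cast
  ring

lemma int_pow4_exp : ∫ x : ℝ, x ^ 4 * Real.exp (-x ^ 2) = 3 * Real.sqrt Real.pi / 4 := by
  have h0 : ∫ x in Ioi (0:ℝ), x ^ 0 * Real.exp (-x ^ 2) = Real.sqrt Real.pi / 2 := by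
    simp only [pow_zero, one_mul]
    have := integral_gaussian_Ioi 1
    simpa using this
  have h2 := int_parts 0
  have h4 := int_parts 2
  rw [show (0:ℕ)+2 = 2 from rfl] at h2
  rw [show (2:ℕ)+2 = 4 from rfl] at h4
  rw [int_even_pow 4 (by decide), h4, h2, h0]
  push_cast
  ring

lemma gaussianPDFReal_half (x : ℝ) :
    gaussianPDFReal 0 (1/2) x = (Real.sqrt Real.pi)⁻¹ * Real.exp (-x^2) := by
  simp only [gaussianPDFReal_def]
  have h1 : (2 * Real.pi * ((1/2 : ℝ≥0) : ℝ)) = Real.pi := by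
    push_cast; ring
  have h2 : -(x - 0)^2 / (2 * ((1/2 : ℝ≥0) : ℝ)) = -x^2 := by
    push_cast; ring
  rw [h1, h2]

lemma gaussianHalf_eq : gaussianReal 0 (1/2) =
    (volume : Measure ℝ).withDensity
      (fun x => ENNReal.ofReal ((Real.sqrt Real.pi)⁻¹ * Real.exp (-x^2))) := by
  rw [gaussianReal_of_var_ne_zero 0 (by norm_num)]
  congr 1
  funext x
  simp only [gaussianPDF_def]
  rw [gaussianPDFReal_half]

lemma measurable_density : Measurable
    (fun x : ℝ => ((Real.sqrt Real.pi)⁻¹ * Real.exp (-x^2)).toNNReal) := by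
  apply Measurable.real_toNNReal
  measurability

lemma integral_gaussianHalf (g : ℝ → ℝ) :
    ∫ x, g x ∂(gaussianReal 0 (1/2))
      = (Real.sqrt Real.pi)⁻¹ * ∫ x, g x * Real.exp (-x^2) := by
  have hd : ∀ x : ℝ, (0:ℝ) ≤ (Real.sqrt Real.pi)⁻¹ * Real.exp (-x^2) := fun x => by positivity
  rw [gaussianHalf_eq]
  have hrw : (fun x : ℝ => ENNReal.ofReal ((Real.sqrt Real.pi)⁻¹ * Real.exp (-x ^ 2)))
      = fun x : ℝ => ((((Real.sqrt Real.pi)⁻¹ * Real.exp (-x ^ 2)).toNNReal : ℝ≥0) : ℝ≥0∞) :=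
    rfl
  rw [hrw, integral_withDensity_eq_integral_smul measurable_density]
  rw [← integral_const_mul]
  congr 1
  funext x
  rw [NNReal.smul_def, Real.coe_toNNReal _ (hd x), smul_eq_mul]
  ring

lemma integrable_gaussianHalf_iff (g : ℝ → ℝ) :
    Integrable g (gaussianReal 0 (1/2))
      ↔ Integrable (fun x => g x * ((Real.sqrt Real.pi)⁻¹ * Real.exp (-x^2))) := by
  rw [gaussianHalf_eq,
    integrable_withDensity_iff (by measurability) (ae_of_all _ fun x => ENNReal.ofReal_lt_top)]
  apply integrable_congr
  apply ae_of_all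
  intro x
  show g x * (ENNReal.ofReal ((Real.sqrt Real.pi)⁻¹ * Real.exp (-x^2))).toReal
      = g x * ((Real.sqrt Real.pi)⁻¹ * Real.exp (-x^2))
  rw [ENNReal.toReal_ofReal (by positivity)]

lemma integrable_shift_pow (a : ℝ) (k : ℕ) :
    Integrable (fun x : ℝ => (a + x)^k * Real.exp (-x^2)) := by
  have h : (fun x : ℝ => (a + x)^k * Real.exp (-x^2))
      = fun x => ∑ j ∈ Finset.range (k+1),
          (a^j * (k.choose j)) * (x^(k-j) * Real.exp (-x^2)) := by
    funext x
    rw [add_pow, Finset.sum_mul]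
    exact Finset.sum_congr rfl fun j hj => by ring
  rw [h]
  exact integrable_finset_sum _ fun j _ => (integrable_pow_mul_exp (k-j)).const_mul _

lemma int_poly (c0 c1 c2 c3 c4 : ℝ) :
    ∫ x : ℝ, (c0 * (x^0 * Real.exp (-x^2)) + (c1 * (x^1 * Real.exp (-x^2))
      + (c2 * (x^2 * Real.exp (-x^2)) + (c3 * (x^3 * Real.exp (-x^2))
      + c4 * (x^4 * Real.exp (-x^2))))))
      = Real.sqrt Real.pi * (c0 + c2 / 2 + 3 * c4 / 4) := by
  have i0 : Integrable (fun x : ℝ => c0 * (x^0 * Real.exp (-x^2))) :=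
    (integrable_pow_mul_exp 0).const_mul _
  have i1 : Integrable (fun x : ℝ => c1 * (x^1 * Real.exp (-x^2))) :=
    (integrable_pow_mul_exp 1).const_mul _
  have i2 : Integrable (fun x : ℝ => c2 * (x^2 * Real.exp (-x^2))) :=
    (integrable_pow_mul_exp 2).const_mul _
  have i3 : Integrable (fun x : ℝ => c3 * (x^3 * Real.exp (-x^2))) :=
    (integrable_pow_mul_exp 3).const_mul _
  have i4 : Integrable (fun x : ℝ => c4 * (x^4 * Real.exp (-x^2))) :=
    (integrable_pow_mul_exp 4).const_mul _
  have i34 : Integrable (fun x : ℝ => c3 * (x^3 * Real.exp (-x^2))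
      + c4 * (x^4 * Real.exp (-x^2))) := by exact i3.add i4
  have i234 : Integrable (fun x : ℝ => c2 * (x^2 * Real.exp (-x^2))
      + (c3 * (x^3 * Real.exp (-x^2)) + c4 * (x^4 * Real.exp (-x^2)))) := by exact i2.add i34
  have i1234 : Integrable (fun x : ℝ => c1 * (x^1 * Real.exp (-x^2))
      + (c2 * (x^2 * Real.exp (-x^2)) + (c3 * (x^3 * Real.exp (-x^2))
      + c4 * (x^4 * Real.exp (-x^2))))) := by exact i1.add i234
  rw [integral_add i0 i1234, integral_add i1 i234, integral_add i2 i34, integral_add i3 i4,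
    integral_const_mul, integral_const_mul, integral_const_mul, integral_const_mul,
    integral_const_mul]
  simp only [pow_zero, one_mul]
  rw [int_exp_sq, int_odd_pow 1 ⟨0, by norm_num⟩, int_odd_pow 3 ⟨1, by norm_num⟩,
    int_sq_exp, int_pow4_exp]
  ring

lemma int_shift2 (a : ℝ) : ∫ x : ℝ, (a + x)^2 * Real.exp (-x^2)
    = Real.sqrt Real.pi * (a^2 + 1/2) := by
  rw [show (fun x : ℝ => (a + x)^2 * Real.exp (-x^2))
      = fun x : ℝ => ((a^2) * (x^0 * Real.exp (-x^2)) + ((2*a) * (x^1 * Real.exp (-x^2))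
        + ((1:ℝ) * (x^2 * Real.exp (-x^2)) + ((0:ℝ) * (x^3 * Real.exp (-x^2))
        + (0:ℝ) * (x^4 * Real.exp (-x^2))))))
    from funext fun x => by ring]
  rw [int_poly]
  ring

lemma int_shift4 (a : ℝ) : ∫ x : ℝ, (a + x)^4 * Real.exp (-x^2)
    = Real.sqrt Real.pi * (a^4 + 3*a^2 + 3/4) := by
  rw [show (fun x : ℝ => (a + x)^4 * Real.exp (-x^2))
      = fun x : ℝ => ((a^4) * (x^0 * Real.exp (-x^2)) + ((4*a^3) * (x^1 * Real.exp (-x^2))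
        + ((6*a^2) * (x^2 * Real.exp (-x^2)) + ((4*a) * (x^3 * Real.exp (-x^2))
        + (1:ℝ) * (x^4 * Real.exp (-x^2))))))
    from funext fun x => by ring]
  rw [int_poly]
  ring

lemma sqrt_pi_ne : Real.sqrt Real.pi ≠ 0 := by positivity

lemma exp_shift2 (a : ℝ) : ∫ x, (a + x)^2 ∂(gaussianReal 0 (1/2)) = a^2 + 1/2 := by
  rw [integral_gaussianHalf, int_shift2, inv_mul_cancel_left₀ sqrt_pi_ne]

lemma exp_shift4 (a : ℝ) : ∫ x, (a + x)^4 ∂(gaussianReal 0 (1/2)) = a^4 + 3*a^2 + 3/4 := by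
  rw [integral_gaussianHalf, int_shift4, inv_mul_cancel_left₀ sqrt_pi_ne]

lemma memLp_shift2 (a : ℝ) : MemLp (fun x : ℝ => (a + x)^2) 2 (gaussianReal 0 (1/2)) := by
  rw [memLp_two_iff_integrable_sq
    ((by fun_prop : Measurable fun x : ℝ => (a + x)^2).aestronglyMeasurable)]
  rw [show (fun x : ℝ => ((a + x)^2)^2) = fun x : ℝ => (a + x)^4 from funext fun x => by ring]
  rw [integrable_gaussianHalf_iff]
  exact ((integrable_shift_pow a 4).const_mul (Real.sqrt Real.pi)⁻¹).congr
    (ae_of_all _ fun x => by ring)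

variable {Ω : Type*} [MeasurableSpace Ω] {μ : Measure Ω} [IsProbabilityMeasure μ]

variable {Ω : Type*} [MeasurableSpace Ω] {μ : Measure Ω} [IsProbabilityMeasure μ]

lemma aemeasurable_of_map_gauss {W : Ω → ℝ} (hW : μ.map W = gaussianReal 0 (1/2)) :
    AEMeasurable W μ := by
  by_contra h
  rw [Measure.map_of_not_aemeasurable h] at hW
  have h1 := congrArg (fun ν : Measure ℝ => ν univ) hW
  simp only [Measure.coe_zero, Pi.zero_apply] at h1
  rw [measure_univ] at h1
  exact zero_ne_one h1

lemma memLp_shift2W {W : Ω → ℝ} (hW : μ.map W = gaussianReal 0 (1/2)) (a : ℝ) :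
    MemLp (fun ω => (a + W ω)^2) 2 μ := by
  have hm := aemeasurable_of_map_gauss hW
  have key : MemLp ((fun x : ℝ => (a + x)^2) ∘ W) 2 μ := by
    rw [← memLp_map_measure_iff
      ((by fun_prop : Measurable fun x : ℝ => (a + x)^2).aestronglyMeasurable) hm, hW]
    exact memLp_shift2 a
  simpa [Function.comp_def] using key

lemma int_shift2W {W : Ω → ℝ} (hW : μ.map W = gaussianReal 0 (1/2)) (a : ℝ) :
    ∫ ω, (a + W ω)^2 ∂μ = a^2 + 1/2 := by
  have hm := aemeasurable_of_map_gauss hW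
  have h := integral_map (φ := W) hm (f := fun x : ℝ => (a + x)^2)
    ((by fun_prop : Measurable fun x : ℝ => (a + x)^2).aestronglyMeasurable)
  rw [hW, exp_shift2] at h
  exact h.symm

lemma int_shift4W {W : Ω → ℝ} (hW : μ.map W = gaussianReal 0 (1/2)) (a : ℝ) :
    ∫ ω, (a + W ω)^4 ∂μ = a^4 + 3*a^2 + 3/4 := by
  have hm := aemeasurable_of_map_gauss hW
  have h := integral_map (φ := W) hm (f := fun x : ℝ => (a + x)^4)
    ((by fun_prop : Measurable fun x : ℝ => (a + x)^4).aestronglyMeasurable)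
  rw [hW, exp_shift4] at h
  exact h.symm

lemma var_shift2W {W : Ω → ℝ} (hW : μ.map W = gaussianReal 0 (1/2)) (a : ℝ) :
    variance (fun ω => (a + W ω)^2) μ = 2*a^2 + 1/2 := by
  rw [variance_eq_sub (memLp_shift2W hW a)]
  simp only [Pi.pow_apply]
  rw [show (∫ ω, ((a + W ω)^2)^2 ∂μ) = ∫ ω, (a + W ω)^4 ∂μ from by
    congr 1; funext ω; ring]
  rw [int_shift2W hW a, int_shift4W hW a]
  ring

lemma variance_sub_const (g : Ω → ℝ) (hg : Integrable g μ) (c : ℝ) :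
    variance (fun ω => g ω - c) μ = variance g μ := by
  have hmean : μ[fun ω => g ω - c] = μ[g] - c := by
    rw [integral_sub hg (integrable_const c), integral_const]
    simp
  rw [variance, variance, evariance, evariance]
  congr 1
  apply lintegral_congr
  intro ω
  rw [hmean]
  congr 2
  ring

variable {Ω : Type*} [MeasurableSpace Ω] {μ : Measure Ω} [IsProbabilityMeasure μ]

lemma entry_memLp (Z : Ω → ℂ) (hZ : IsStdComplexGaussianEntry μ Z) (c : ℂ) :
    MemLp (fun ω => Complex.normSq (c + Z ω)) 2 μ := by
  obtain ⟨hind, hre, him⟩ := hZ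
  have hfun : (fun ω => Complex.normSq (c + Z ω))
      = fun ω => (c.re + (Z ω).re)^2 + (c.im + (Z ω).im)^2 := by
    funext ω
    simp only [Complex.normSq_apply, Complex.add_re, Complex.add_im]
    ring
  rw [hfun]
  exact (memLp_shift2W hre c.re).add (memLp_shift2W him c.im)

lemma entry_var (Z : Ω → ℂ) (hZ : IsStdComplexGaussianEntry μ Z) (c : ℂ) :
    variance (fun ω => Complex.normSq (c + Z ω)) μ = 2 * Complex.normSq c + 1 := by
  obtain ⟨hind, hre, him⟩ := hZ
  have hfun : (fun ω => Complex.normSq (c + Z ω))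
      = fun ω => (c.re + (Z ω).re)^2 + (c.im + (Z ω).im)^2 := by
    funext ω
    simp only [Complex.normSq_apply, Complex.add_re, Complex.add_im]
    ring
  have hiAB : IndepFun (fun ω => (c.re + (Z ω).re)^2) (fun ω => (c.im + (Z ω).im)^2) μ := by
    have h := hind.comp (φ := fun t : ℝ => (c.re + t)^2) (ψ := fun t : ℝ => (c.im + t)^2)
      (by fun_prop) (by fun_prop)
    simpa [Function.comp_def] using h
  rw [hfun]
  have hadd := IndepFun.variance_add (memLp_shift2W hre c.re) (memLp_shift2W him c.im) hiAB
  rw [show (fun ω => (c.re + (Z ω).re)^2 + (c.im + (Z ω).im)^2)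
      = (fun ω => (c.re + (Z ω).re)^2) + (fun ω => (c.im + (Z ω).im)^2) from rfl, hadd,
    var_shift2W hre c.re, var_shift2W him c.im, Complex.normSq_apply]
  ring

lemma trace_normSq {n N : ℕ} (M : Matrix (Fin n) (Fin N) ℂ) :
    ((1 / (n : ℂ)) * Matrix.trace (((N : ℂ))⁻¹ • (M * Mᴴ))).re
      = ((n : ℝ) * (N : ℝ))⁻¹ * ∑ p : Fin n × Fin N, Complex.normSq (M p.1 p.2) := by
  have h1 : Matrix.trace (M * Mᴴ)
      = ((∑ p : Fin n × Fin N, Complex.normSq (M p.1 p.2) : ℝ) : ℂ) := by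
    rw [Matrix.trace]
    simp only [Matrix.diag_apply, Matrix.mul_apply, Matrix.conjTranspose_apply]
    rw [← Finset.univ_product_univ, Finset.sum_product]
    push_cast
    congr 1
    funext i
    congr 1
    funext j
    rw [show star (M i j) = (starRingEnd ℂ) (M i j) from rfl, Complex.mul_conj]
  rw [Matrix.trace_smul, h1, smul_eq_mul,
    show (1 / (n : ℂ)) = (((1 / n : ℝ)) : ℂ) by push_cast; ring,
    show ((N : ℂ))⁻¹ = ((((N : ℝ))⁻¹ : ℝ) : ℂ) by push_cast; ring,
    ← Complex.ofReal_mul, ← Complex.ofReal_mul, Complex.ofReal_re]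
  by_cases hn : (n : ℝ) = 0
  · simp [hn]
  by_cases hN : (N : ℝ) = 0
  · simp [hN]
  field_simp

end Aux

/-- For `Y = D + X` with `X` standard complex Gaussian, the unbiased estimator
`T = tr_norm((1/N) Y Yᴴ) - 1` of `D₁ = tr_norm((1/N) D Dᴴ)` has variance
`(2 D₁ + 1)/(nN)`. -/
theorem stmt_12 {Ω : Type*} [MeasurableSpace Ω] (μ : Measure Ω) [IsProbabilityMeasure μ]
    (n N : ℕ) (hn : 0 < n) (hN : 0 < N)
    (D : Matrix (Fin n) (Fin N) ℂ) (X : Ω → Matrix (Fin n) (Fin N) ℂ)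
    (hX : IsStdComplexGaussian μ X)
    (Y : Ω → Matrix (Fin n) (Fin N) ℂ) (hY : ∀ ω, Y ω = D + X ω)
    (T : Ω → ℝ)
    (hT : T = fun ω => ((1 / (n : ℂ)) * Matrix.trace (((N : ℂ))⁻¹ • (Y ω * (Y ω)ᴴ))).re - 1)
    (D1 : ℝ) (hD1 : D1 = ((1 / (n : ℂ)) * Matrix.trace (((N : ℂ))⁻¹ • (D * Dᴴ))).re) :
    variance T μ = (2 * D1 + 1) / (n * N) := by
  obtain ⟨hindep, hentries⟩ := hX
  set f : Fin n × Fin N → Ω → ℝ :=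
    fun p ω => Complex.normSq (D p.1 p.2 + X ω p.1 p.2) with hfdef
  have hmem : ∀ p : Fin n × Fin N, MemLp (f p) 2 μ :=
    fun p => entry_memLp _ (hentries p.1 p.2) (D p.1 p.2)
  have hvarp : ∀ p : Fin n × Fin N, variance (f p) μ = 2 * Complex.normSq (D p.1 p.2) + 1 :=
    fun p => entry_var _ (hentries p.1 p.2) (D p.1 p.2)
  have hind : iIndepFun f μ := by
    have h := hindep.comp
      (fun (p : Fin n × Fin N) (z : ℂ) => Complex.normSq (D p.1 p.2 + z))
      (fun p => (Complex.continuous_normSq.comp (continuous_const.add continuous_id)).measurable)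
    exact h
  have hc : ((n : ℝ) * (N : ℝ)) ≠ 0 := by positivity
  have hT2 : T = fun ω => ((n : ℝ) * (N : ℝ))⁻¹ * (∑ p : Fin n × Fin N, f p ω) - 1 := by
    rw [hT]
    funext ω
    rw [hY ω, trace_normSq]
    simp only [Matrix.add_apply, hfdef]
  have hD1' : D1 = ((n : ℝ) * (N : ℝ))⁻¹ * ∑ p : Fin n × Fin N, Complex.normSq (D p.1 p.2) := by
    rw [hD1, trace_normSq]
  have hSsum : (fun ω => ∑ p : Fin n × Fin N, f p ω) = ∑ p : Fin n × Fin N, f p := by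
    funext ω
    simp [Finset.sum_apply]
  have hSmem : MemLp (fun ω => ∑ p : Fin n × Fin N, f p ω) 2 μ := by
    rw [hSsum]
    exact memLp_finset_sum' _ fun p _ => hmem p
  have hint : Integrable (fun ω => ((n : ℝ) * (N : ℝ))⁻¹ * ∑ p : Fin n × Fin N, f p ω) μ :=
    (hSmem.integrable one_le_two).const_mul _
  rw [hT2, variance_sub_const _ hint 1,
    show (fun ω => ((n : ℝ) * (N : ℝ))⁻¹ * ∑ p : Fin n × Fin N, f p ω)
      = ((n : ℝ) * (N : ℝ))⁻¹ • (fun ω => ∑ p : Fin n × Fin N, f p ω) from rfl,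
    variance_smul, hSsum,
    IndepFun.variance_sum (fun p _ => hmem p)
      (fun p _ q _ hpq => hind.indepFun hpq)]
  have hsum : ∑ p : Fin n × Fin N, variance (f p) μ
      = 2 * (∑ p : Fin n × Fin N, Complex.normSq (D p.1 p.2)) + (n : ℝ) * (N : ℝ) := by
    rw [Finset.sum_congr rfl fun p _ => hvarp p, Finset.sum_add_distrib, Finset.sum_const,
      ← Finset.mul_sum, Finset.card_univ]
    simp only [Fintype.card_prod, Fintype.card_fin, nsmul_eq_mul, Nat.cast_mul]
    ring
  rw [hsum, hD1', eq_div_iff hc]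
  field_simp
end
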